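/- Let E be a complete separable metric space, let (μ_n) be a sequence of finite Borel measures on E converging weakly to a finite Borel measure μ, let A be a topological space, let (a_n) be a sequence in A converging to a ∈ A, and let g : A × E → ℝ be a bounded continuous function. Then ∫ g(a_n, z) dμ_n(z) converges to ∫ g(a, z) dμ(z) as n → ∞. -/

import Mathlib

open MeasureTheory Filter Set Metric
open scoped ENNReal NNReal Topology BoundedContinuousFunction

lemma aux_tight {E : Type*} [MetricSpace E] [CompleteSpace E]
    [TopologicalSpace.SeparableSpace E] [MeasurableSpace E] [BorelSpace E]
    (mu : ℕ → FiniteMeasure E) (mulim : FiniteMeasure E)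
    (hmu : Tendsto mu atTop (nhds mulim)) (eps : ℝ≥0∞) (heps : 0 < eps) :
    ∃ K : Set E, IsCompact K ∧ ∀ n, (mu n : Measure E) Kᶜ ≤ eps := by
  rcases isEmpty_or_nonempty E with hE | hE
  · refine ⟨∅, isCompact_empty, fun n => ?_⟩
    rw [Set.compl_empty, Set.univ_eq_empty_iff.mpr hE, measure_empty]
    exact zero_le
  set x : ℕ → E := TopologicalSpace.denseSeq E with hx
  have hdense : DenseRange x := TopologicalSpace.denseRange_denseSeq E
  set U : ℕ → ℕ → Set E :=
    fun k m => ⋃ i ∈ Finset.range (m + 1), Metric.ball (x i) ((k + 1 : ℝ))⁻¹ with hU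
  have hUopen : ∀ k m, IsOpen (U k m) := fun k m =>
    isOpen_biUnion fun _ _ => Metric.isOpen_ball
  have hUmono : ∀ k, Monotone (U k) := by
    intro k i j hij
    exact Set.biUnion_subset_biUnion_left
      (Finset.coe_subset.mpr (Finset.range_subset_range.mpr (by omega)))
  have hIempty : ∀ k, (⋂ m, (U k m)ᶜ) = ∅ := by
    intro k
    rw [Set.eq_empty_iff_forall_notMem]
    intro z hz
    have hpos : (0:ℝ) < ((k:ℝ) + 1)⁻¹ := by positivity
    obtain ⟨i, hi⟩ := Metric.denseRange_iff.mp hdense z _ hpos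
    have hz' : z ∈ U k i := by
      apply Set.mem_biUnion (Finset.self_mem_range_succ i)
      simpa [Metric.mem_ball, dist_comm] using hi
    exact (Set.mem_iInter.mp hz i) hz'
  have key : ∀ (k : ℕ) (ν : FiniteMeasure E),
      Tendsto (fun m => (ν : Measure E) (U k m)ᶜ) atTop (𝓝 0) := by
    intro k ν
    have h := tendsto_measure_iInter_atTop (μ := (ν : Measure E))
      (s := fun m => (U k m)ᶜ)
      (fun m => ((hUopen k m).isClosed_compl.measurableSet).nullMeasurableSet)
      (fun i j hij => Set.compl_subset_compl.mpr (hUmono k hij))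
      ⟨0, measure_ne_top _ _⟩
    rwa [hIempty k, measure_empty] at h
  have hk : ∀ k : ℕ, ∃ m, ∀ n, (mu n : Measure E) (U k m)ᶜ < eps * 2⁻¹ ^ (k + 1) := by
    intro k
    set δ : ℝ≥0∞ := eps * 2⁻¹ ^ (k + 1) with hδ
    have hδpos : 0 < δ := ENNReal.mul_pos heps.ne' (by
      apply pow_ne_zero
      simp)
    obtain ⟨m0, hm0⟩ := ((key k mulim).eventually_lt_const hδpos).exists
    have hlimsup : (atTop.limsup fun n => (mu n : Measure E) (U k m0)ᶜ) ≤
        (mulim : Measure E) (U k m0)ᶜ :=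
      FiniteMeasure.limsup_measure_closed_le_of_tendsto hmu (hUopen k m0).isClosed_compl
    have hev : ∀ᶠ n in atTop, (mu n : Measure E) (U k m0)ᶜ < δ :=
      eventually_lt_of_limsup_lt (lt_of_le_of_lt hlimsup hm0)
    obtain ⟨N, hN⟩ := eventually_atTop.mp hev
    have hfin : ∀ᶠ m in atTop, ∀ n ∈ Finset.range N, (mu n : Measure E) (U k m)ᶜ < δ := by
      rw [eventually_all_finset]
      intro n _
      exact (key k (mu n)).eventually_lt_const hδpos
    obtain ⟨m1, hm1, hm1'⟩ := (hfin.and (eventually_ge_atTop m0)).exists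
    refine ⟨m1, fun n => ?_⟩
    rcases lt_or_ge n N with hn | hn
    · exact hm1 n (Finset.mem_range.mpr hn)
    · exact lt_of_le_of_lt
        (measure_mono (Set.compl_subset_compl.mpr (hUmono k hm1'))) (hN n hn)
  choose m hm using hk
  refine ⟨⋂ k, closure (U k (m k)), ?_, ?_⟩
  · apply TotallyBounded.isCompact_of_isClosed
    · rw [Metric.totallyBounded_iff]
      intro r hr
      obtain ⟨k, hkgt⟩ := exists_nat_gt r⁻¹
      have hkr : ((k : ℝ) + 1)⁻¹ < r := by
        rw [inv_lt_comm₀ (by positivity) hr]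
        exact hkgt.trans (lt_add_one _)
      refine ⟨x '' {i | i < m k + 1}, (Set.finite_Iio _).image _, ?_⟩
      intro z hz
      have hz1 : z ∈ closure (U k (m k)) := Set.mem_iInter.mp hz k
      have hsub : closure (U k (m k)) ⊆
          ⋃ i ∈ Finset.range (m k + 1), Metric.closedBall (x i) ((k + 1 : ℝ))⁻¹ := by
        apply closure_minimal
        · exact Set.iUnion₂_mono fun i _ => Metric.ball_subset_closedBall
        · exact Set.Finite.isClosed_biUnion (Finset.finite_toSet _)
            fun i _ => Metric.isClosed_closedBall
      obtain ⟨i, hi1, hi2⟩ := Set.mem_iUnion₂.mp (hsub hz1)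
      refine Set.mem_biUnion ⟨i, Finset.mem_range.mp hi1, rfl⟩ ?_
      rw [Metric.mem_ball]
      exact lt_of_le_of_lt (Metric.mem_closedBall.mp hi2) hkr
    · exact isClosed_iInter fun _ => isClosed_closure
  · intro n
    rw [Set.compl_iInter]
    calc (mu n : Measure E) (⋃ k, (closure (U k (m k)))ᶜ)
        ≤ ∑' k, (mu n : Measure E) (closure (U k (m k)))ᶜ := measure_iUnion_le _
      _ ≤ ∑' k, (mu n : Measure E) (U k (m k))ᶜ :=
          ENNReal.tsum_le_tsum fun k =>
            measure_mono (Set.compl_subset_compl.mpr subset_closure)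
      _ ≤ ∑' k, eps * 2⁻¹ ^ (k + 1) := ENNReal.tsum_le_tsum fun k => (hm k n).le
      _ = eps := by
          rw [ENNReal.tsum_mul_left]
          have h1 : ∑' k : ℕ, (2⁻¹ : ℝ≥0∞) ^ (k + 1) = 1 := by
            simp_rw [pow_succ]
            rw [ENNReal.tsum_mul_right, ENNReal.tsum_geometric, ENNReal.one_sub_inv_two,
              inv_inv, ENNReal.mul_inv_cancel two_ne_zero ENNReal.ofNat_ne_top]
          rw [h1, mul_one]

/-- Let `E` be a complete separable metric space, `(μ_n)` a sequence of finite
Borel measures on `E` converging weakly to a finite Borel measure `μ`, `A` a topological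
space, `(a_n)` a sequence in `A` converging to `a`, and `g : A × E → ℝ` a bounded continuous
function. Then `∫ g(a_n, z) dμ_n(z) → ∫ g(a, z) dμ(z)`. -/
theorem stmt13 {E : Type*} [MetricSpace E] [CompleteSpace E]
    [TopologicalSpace.SeparableSpace E] [MeasurableSpace E] [BorelSpace E]
    {A : Type*} [TopologicalSpace A]
    (μ : ℕ → FiniteMeasure E) (μlim : FiniteMeasure E)
    (hμ : Tendsto μ atTop (nhds μlim))
    (a : ℕ → A) (alim : A) (ha : Tendsto a atTop (nhds alim))
    (g : A × E → ℝ) (hgc : Continuous g) (hgb : ∃ C, ∀ x, |g x| ≤ C) :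
    Tendsto (fun n => ∫ z, g (a n, z) ∂(μ n : Measure E)) atTop
      (nhds (∫ z, g (alim, z) ∂(μlim : Measure E))) := by
  obtain ⟨C, hC⟩ := hgb
  set C₀ : ℝ := max C 1 with hC₀def
  have hC₀pos : (0:ℝ) < C₀ := lt_of_lt_of_le one_pos (le_max_right _ _)
  have hC₀ : ∀ x, |g x| ≤ C₀ := fun x => (hC x).trans (le_max_left _ _)
  -- bounded continuous function associated to each parameter value
  have hcont : ∀ p : A, Continuous (fun z : E => g (p, z)) :=
    fun p => hgc.comp (Continuous.prodMk_right p)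
  set G : A → (E →ᵇ ℝ) := fun p =>
    BoundedContinuousFunction.ofNormedAddCommGroup (fun z => g (p, z)) (hcont p) C₀
      (fun z => by rw [Real.norm_eq_abs]; exact hC₀ _) with hG
  have hint : ∀ (p : A) (n : ℕ), Integrable (fun z => g (p, z)) (μ n : Measure E) :=
    fun p n => (G p).integrable _
  -- convergence of the second term by weak convergence
  have T2 : Tendsto (fun n => ∫ z, g (alim, z) ∂(μ n : Measure E)) atTop
      (nhds (∫ z, g (alim, z) ∂(μlim : Measure E))) :=
    FiniteMeasure.tendsto_iff_forall_integral_tendsto.mp hμ (G alim)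
  suffices hdiff : Tendsto (fun n =>
      (∫ z, g (a n, z) ∂(μ n : Measure E)) - ∫ z, g (alim, z) ∂(μ n : Measure E)) atTop
      (nhds 0) by
    have h := hdiff.add T2
    rw [zero_add] at h
    simpa using h
  rw [NormedAddCommGroup.tendsto_nhds_zero]
  intro δ hδ
  set M : ℝ := (μlim.mass : ℝ) + 1 with hMdef
  have hMpos : (0:ℝ) < M := lt_of_le_of_lt (μlim.mass.coe_nonneg) (lt_add_one _)
  set ε' : ℝ := δ / (4 * M) with hε'def
  have hε'pos : (0:ℝ) < ε' := by positivity
  -- tightness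
  obtain ⟨K, hKc, hKm⟩ := aux_tight μ μlim hμ (ENNReal.ofReal (δ / (8 * C₀)))
    (ENNReal.ofReal_pos.mpr (by positivity))
  -- tube lemma
  set W : Set (A × E) := {p | |g p - g (alim, p.2)| < ε'} with hW
  have hWopen : IsOpen W :=
    isOpen_lt ((hgc.sub ((hgc.comp (Continuous.prodMk_right alim)).comp continuous_snd)).abs)
      continuous_const
  have hsubW : ({alim} : Set A) ×ˢ K ⊆ W := by
    rintro ⟨p, z⟩ ⟨hp, hz⟩
    simp only [Set.mem_singleton_iff] at hp
    simp [hW, hp, hε'pos]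
  obtain ⟨U, V, hUopen, hVopen, hUmem, hVmem, hUVW⟩ :=
    generalized_tube_lemma isCompact_singleton hKc hWopen hsubW
  have haU : ∀ᶠ n in atTop, a n ∈ U :=
    ha (hUopen.mem_nhds (hUmem rfl))
  have hmass : ∀ᶠ n in atTop, ((μ n).mass : ℝ) ≤ M := by
    have h := (NNReal.tendsto_coe.mpr hμ.mass)
    exact h.eventually_le_const (lt_add_one _)
  filter_upwards [haU, hmass] with n hn1 hn2
  have hint1 := hint (a n) n
  have hint2 := hint alim n
  have hintf : Integrable (fun z => g (a n, z) - g (alim, z)) (μ n : Measure E) :=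
    hint1.sub hint2
  rw [← integral_sub hint1 hint2,
    ← integral_add_compl hKc.measurableSet hintf]
  have hbK : ‖∫ z in K, (g (a n, z) - g (alim, z)) ∂(μ n : Measure E)‖ ≤
      ε' * ((μ n : Measure E) K).toReal := by
    apply norm_setIntegral_le_of_norm_le_const (measure_lt_top _ _)
    intro z hz
    rw [Real.norm_eq_abs]
    exact (hUVW ⟨hn1, hVmem hz⟩).le
  have hbKc : ‖∫ z in Kᶜ, (g (a n, z) - g (alim, z)) ∂(μ n : Measure E)‖ ≤
      (2 * C₀) * ((μ n : Measure E) Kᶜ).toReal := by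
    apply norm_setIntegral_le_of_norm_le_const (measure_lt_top _ _)
    intro z hz
    rw [Real.norm_eq_abs]
    calc |g (a n, z) - g (alim, z)| ≤ |g (a n, z)| + |g (alim, z)| := abs_sub _ _
      _ ≤ C₀ + C₀ := add_le_add (hC₀ _) (hC₀ _)
      _ = 2 * C₀ := by ring
  have hmK : ((μ n : Measure E) K).toReal ≤ M := by
    calc ((μ n : Measure E) K).toReal
        ≤ ((μ n : Measure E) Set.univ).toReal :=
          ENNReal.toReal_mono (measure_ne_top _ _) (measure_mono (Set.subset_univ _))
      _ = ((μ n).mass : ℝ) := by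
          rw [← FiniteMeasure.ennreal_mass, ENNReal.coe_toReal]
      _ ≤ M := hn2
  have hmKc : ((μ n : Measure E) Kᶜ).toReal ≤ δ / (8 * C₀) := by
    calc ((μ n : Measure E) Kᶜ).toReal
        ≤ (ENNReal.ofReal (δ / (8 * C₀))).toReal :=
          ENNReal.toReal_mono ENNReal.ofReal_ne_top (hKm n)
      _ = δ / (8 * C₀) := ENNReal.toReal_ofReal (by positivity)
  calc ‖(∫ z in K, (g (a n, z) - g (alim, z)) ∂(μ n : Measure E)) +
        ∫ z in Kᶜ, (g (a n, z) - g (alim, z)) ∂(μ n : Measure E)‖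
      ≤ ‖∫ z in K, (g (a n, z) - g (alim, z)) ∂(μ n : Measure E)‖ +
        ‖∫ z in Kᶜ, (g (a n, z) - g (alim, z)) ∂(μ n : Measure E)‖ := norm_add_le _ _
    _ ≤ ε' * ((μ n : Measure E) K).toReal + (2 * C₀) * ((μ n : Measure E) Kᶜ).toReal :=
        add_le_add hbK hbKc
    _ ≤ ε' * M + (2 * C₀) * (δ / (8 * C₀)) := by
        apply add_le_add
        · exact mul_le_mul_of_nonneg_left hmK hε'pos.le
        · exact mul_le_mul_of_nonneg_left hmKc (by positivity)
    _ < δ := by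
        have h1 : ε' * M = δ / 4 := by
          rw [hε'def]; field_simp
        have h2 : (2 * C₀) * (δ / (8 * C₀)) = δ / 4 := by
          field_simp; ring
        rw [h1, h2]
        linarith
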